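/- arXiv:2512.02553 — 4 statements merged into one kernel-verified Lean document; each statement's English description precedes it below -/
import Mathlib

section
/- Let p be a prime and G a finite group. Suppose that for every second maximal subgroup H of G with p dividing |H|, every maximal subgroup of G containing H is solvable. Then every maximal subgroup of G is p-solvable. -/
/-- A finite group is `p`-solvable if it has a normal series each of whose
factors is a `p`-group or a group of order coprime to `p`. -/
def IsPSolvable (p : ℕ) (G : Type*) [Group G] : Prop :=
  ∃ (n : ℕ) (s : Fin (n + 1) → Subgroup G),
    s 0 = ⊥ ∧ s (Fin.last n) = ⊤ ∧
    ∀ i : Fin n,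
      s i.castSucc ≤ s i.succ ∧
      ((s i.castSucc).subgroupOf (s i.succ)).Normal ∧
      ((∃ k : ℕ, Nat.card ((s i.succ) ⧸ (s i.castSucc).subgroupOf (s i.succ)) = p ^ k) ∨
        ¬ p ∣ Nat.card ((s i.succ) ⧸ (s i.castSucc).subgroupOf (s i.succ)))

/-- `H` is a second maximal subgroup of `G`: it is a maximal subgroup of some
maximal subgroup of `G`. -/
def IsSecondMaximal {G : Type*} [Group G] (H : Subgroup G) : Prop :=
  ∃ M : Subgroup G, IsCoatom M ∧ H ≤ M ∧ IsCoatom (H.subgroupOf M)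

section Helpers

variable {H : Type*} [Group H]

/-- An elementary version of the relation between consecutive terms. -/
def PRel (p : ℕ) (A B : Subgroup H) : Prop :=
  A ≤ B ∧ (∀ b ∈ B, ∀ a ∈ A, b * a * b⁻¹ ∈ A) ∧
    ((∃ k : ℕ, Nat.card B / Nat.card A = p ^ k) ∨ ¬ p ∣ Nat.card B / Nat.card A)

lemma pRel_refl [Finite H] (p : ℕ) (A : Subgroup H) : PRel p A A := by
  refine ⟨le_rfl, fun b hb a ha => ?_, Or.inl ⟨0, ?_⟩⟩
  · exact A.mul_mem (A.mul_mem hb ha) (A.inv_mem hb)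
  · rw [Nat.div_self Nat.card_pos, pow_zero]

lemma normal_subgroupOf_of_conj {A B : Subgroup H} (hAB : A ≤ B)
    (hc : ∀ b ∈ B, ∀ a ∈ A, b * a * b⁻¹ ∈ A) : ((A.subgroupOf B)).Normal := by
  constructor
  intro n hn g
  rw [Subgroup.mem_subgroupOf] at hn ⊢
  exact hc g g.2 n hn

lemma card_quot_eq [Finite H] {A B : Subgroup H} (hAB : A ≤ B) :
    Nat.card (B ⧸ A.subgroupOf B) = Nat.card B / Nat.card A := by
  have h1 := Subgroup.card_eq_card_quotient_mul_card_subgroup (A.subgroupOf B)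
  have h2 : Nat.card (A.subgroupOf B) = Nat.card A :=
    Nat.card_congr (Subgroup.subgroupOfEquivOfLe hAB).toEquiv
  rw [h2] at h1
  rw [h1, Nat.mul_div_cancel _ Nat.card_pos]

/-- the factor condition as it appears in `IsPSolvable`. -/
def PRel' (p : ℕ) (A B : Subgroup H) : Prop :=
  A ≤ B ∧ (A.subgroupOf B).Normal ∧
    ((∃ k : ℕ, Nat.card (B ⧸ A.subgroupOf B) = p ^ k) ∨
      ¬ p ∣ Nat.card (B ⧸ A.subgroupOf B))

lemma isPSolvable_of_chain [Finite H] {p : ℕ} {l : List (Subgroup H)}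
    (h0 : l.head? = some ⊥) (h1 : l.getLast? = some ⊤) (hc : l.Chain' (PRel p)) :
    IsPSolvable p H := by
  have hne : l ≠ [] := by rintro rfl; simp at h0
  have hpos : 0 < l.length := List.length_pos_iff.mpr hne
  have hlen : l.length - 1 + 1 = l.length := Nat.succ_pred_eq_of_pos hpos
  refine ⟨l.length - 1, fun i => l.get (Fin.cast hlen i), ?_, ?_, ?_⟩
  · show l.get ⟨0, hpos⟩ = ⊥
    have : l.head? = some (l.get ⟨0, hpos⟩) := by
      rw [List.head?_eq_head hne]
      exact congrArg some (List.getElem_zero hpos).symm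
    rw [this] at h0
    exact (Option.some_injective _ h0)
  · show l.get ⟨l.length - 1, by omega⟩ = ⊤
    have : l.getLast? = some (l.get ⟨l.length - 1, by omega⟩) := by
      rw [List.getLast?_eq_getLast hne, List.getLast_eq_getElem]
      rfl
    rw [this] at h1
    exact (Option.some_injective _ h1)
  · intro i
    have hi : (i : ℕ) < l.length - 1 := i.2
    have hrel := List.isChain_iff_getElem.mp hc i (by omega)
    show PRel' p l[(i : ℕ)] l[(i : ℕ) + 1]
    obtain ⟨hle, hconj, hcard⟩ := hrel
    refine ⟨hle, normal_subgroupOf_of_conj hle hconj, ?_⟩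
    rwa [card_quot_eq hle]

end Helpers

section Transfer

variable {H : Type*} [Group H] [Finite H] {p : ℕ}

lemma chain_of_subgroup (N : Subgroup H) (hs : IsPSolvable p N) :
    ∃ l : List (Subgroup H), l ≠ [] ∧ l.head? = some ⊥ ∧ l.getLast? = some N ∧
      l.Chain' (PRel p) := by
  obtain ⟨n, s, hs0, hsl, hstep⟩ := hs
  refine ⟨List.ofFn (fun i : Fin (n + 1) => (s i).map N.subtype), by simp, ?_, ?_, ?_⟩
  · have hne : List.ofFn (fun i : Fin (n + 1) => (s i).map N.subtype) ≠ [] := by simp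
    rw [List.head?_eq_head hne, List.head_ofFn hne]
    simp [hs0]
  · have hne : List.ofFn (fun i : Fin (n + 1) => (s i).map N.subtype) ≠ [] := by simp
    rw [List.getLast?_eq_getLast hne, List.getLast_ofFn hne]
    have : (⟨n + 1 - 1, Nat.sub_one_lt (by omega)⟩ : Fin (n + 1)) = Fin.last n := by
      ext; simp
    rw [this, hsl]
    rw [← MonoidHom.range_eq_map, Subgroup.range_subtype]
  · change List.IsChain _ _
    rw [List.isChain_iff_getElem]
    intro i hi
    simp only [List.length_ofFn] at hi
    simp only [List.getElem_ofFn]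
    have hi' : i < n := by omega
    obtain ⟨hle, hnorm, hcard⟩ := hstep ⟨i, hi'⟩
    have ec : (⟨i, hi'⟩ : Fin n).castSucc = (Fin.cast (by simp) (⟨i, by simpa using (by omega : i < n + 1)⟩ : Fin (List.ofFn (fun i : Fin (n + 1) => (s i).map N.subtype)).length)) := by
      ext; simp
    have es : (⟨i, hi'⟩ : Fin n).succ = (Fin.cast (by simp) (⟨i + 1, by simpa using (by omega : i + 1 < n + 1)⟩ : Fin (List.ofFn (fun i : Fin (n + 1) => (s i).map N.subtype)).length)) := by
      ext; simp
    change PRel p ((s (⟨i, hi'⟩ : Fin n).castSucc).map N.subtype) ((s (⟨i, hi'⟩ : Fin n).succ).map N.subtype)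
    set A := s (⟨i, hi'⟩ : Fin n).castSucc with hA
    set B := s (⟨i, hi'⟩ : Fin n).succ with hB
    refine ⟨Subgroup.map_mono hle, ?_, ?_⟩
    · rintro b hb a ha
      rw [Subgroup.mem_map] at hb ha ⊢
      obtain ⟨y, hy, rfl⟩ := hb
      obtain ⟨x, hx, rfl⟩ := ha
      have hxB : x ∈ B := hle hx
      have hmem : (⟨x, hxB⟩ : B) ∈ A.subgroupOf B := by
        rwa [Subgroup.mem_subgroupOf]
      have hconj := hnorm.conj_mem _ hmem ⟨y, hy⟩
      rw [Subgroup.mem_subgroupOf] at hconj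
      exact ⟨y * x * y⁻¹, hconj, by simp⟩
    · have cA : Nat.card (A.map N.subtype) = Nat.card A :=
        (Nat.card_congr (Subgroup.equivMapOfInjective A N.subtype
          N.subtype_injective).toEquiv).symm
      have cB : Nat.card (B.map N.subtype) = Nat.card B :=
        (Nat.card_congr (Subgroup.equivMapOfInjective B N.subtype
          N.subtype_injective).toEquiv).symm
      rw [cA, cB, ← card_quot_eq hle]
      exact hcard

lemma card_comap_mk' (N : Subgroup H) [N.Normal] (v : Subgroup (H ⧸ N)) :
    Nat.card (v.comap (QuotientGroup.mk' N)) = Nat.card v * Nat.card N := by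
  set K := v.comap (QuotientGroup.mk' N) with hK
  have hNK : N ≤ K := by
    intro x hx
    rw [hK, Subgroup.mem_comap]
    have : QuotientGroup.mk' N x = 1 := (QuotientGroup.eq_one_iff x).mpr hx
    rw [this]
    exact v.one_mem
  have h1 := Subgroup.card_eq_card_quotient_mul_card_subgroup (N.subgroupOf K)
  have h2 : Nat.card (N.subgroupOf K) = Nat.card N :=
    Nat.card_congr (Subgroup.subgroupOfEquivOfLe hNK).toEquiv
  let φ : K →* v :=
    ((QuotientGroup.mk' N).comp K.subtype).codRestrict v (fun x => x.2)
  have hφs : Function.Surjective φ := by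
    rintro ⟨y, hy⟩
    obtain ⟨x, hx⟩ := QuotientGroup.mk'_surjective N y
    refine ⟨⟨x, by rw [hK, Subgroup.mem_comap, hx]; exact hy⟩, ?_⟩
    apply Subtype.ext
    exact hx
  have hker : MonoidHom.ker φ = N.subgroupOf K := by
    ext x
    simp only [MonoidHom.mem_ker, Subgroup.mem_subgroupOf]
    constructor
    · intro hx
      have : QuotientGroup.mk' N (x : H) = 1 := congrArg Subtype.val hx
      exact (QuotientGroup.eq_one_iff _).mp this
    · intro hx
      apply Subtype.ext
      exact (QuotientGroup.eq_one_iff _).mpr hx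
  have h3 : Nat.card (K ⧸ N.subgroupOf K) = Nat.card v := by
    rw [← hker]
    exact Nat.card_congr (QuotientGroup.quotientKerEquivOfSurjective φ hφs).toEquiv
  rw [h2, h3] at h1
  exact h1

lemma chain_of_quotient (N : Subgroup H) [N.Normal] (hq : IsPSolvable p (H ⧸ N)) :
    ∃ l : List (Subgroup H), l ≠ [] ∧ l.head? = some N ∧ l.getLast? = some ⊤ ∧
      l.Chain' (PRel p) := by
  obtain ⟨n, s, hs0, hsl, hstep⟩ := hq
  refine ⟨List.ofFn (fun i : Fin (n + 1) => (s i).comap (QuotientGroup.mk' N)),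
    by simp, ?_, ?_, ?_⟩
  · have hne : List.ofFn (fun i : Fin (n + 1) => (s i).comap (QuotientGroup.mk' N)) ≠ [] := by
      simp
    rw [List.head?_eq_head hne, List.head_ofFn hne]
    have : (⟨0, Nat.pos_of_ne_zero (by omega)⟩ : Fin (n + 1)) = 0 := rfl
    rw [this, hs0]
    rw [MonoidHom.comap_bot, QuotientGroup.ker_mk']
  · have hne : List.ofFn (fun i : Fin (n + 1) => (s i).comap (QuotientGroup.mk' N)) ≠ [] := by
      simp
    rw [List.getLast?_eq_getLast hne, List.getLast_ofFn hne]
    have : (⟨n + 1 - 1, Nat.sub_one_lt (by omega)⟩ : Fin (n + 1)) = Fin.last n := by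
      ext; simp
    rw [this, hsl]
    rw [Subgroup.comap_top]
  · change List.IsChain _ _
    rw [List.isChain_iff_getElem]
    intro i hi
    simp only [List.length_ofFn] at hi
    simp only [List.getElem_ofFn]
    have hi' : i < n := by omega
    obtain ⟨hle, hnorm, hcard⟩ := hstep ⟨i, hi'⟩
    have ec : (⟨i, hi'⟩ : Fin n).castSucc = (Fin.cast (by simp) (⟨i, by simpa using (by omega : i < n + 1)⟩ : Fin (List.ofFn (fun i : Fin (n + 1) => (s i).comap (QuotientGroup.mk' N))).length)) := by
      ext; simp
    have es : (⟨i, hi'⟩ : Fin n).succ = (Fin.cast (by simp) (⟨i + 1, by simpa using (by omega : i + 1 < n + 1)⟩ : Fin (List.ofFn (fun i : Fin (n + 1) => (s i).comap (QuotientGroup.mk' N))).length)) := by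
      ext; simp
    change PRel p ((s (⟨i, hi'⟩ : Fin n).castSucc).comap (QuotientGroup.mk' N)) ((s (⟨i, hi'⟩ : Fin n).succ).comap (QuotientGroup.mk' N))
    set A := s (⟨i, hi'⟩ : Fin n).castSucc with hA
    set B := s (⟨i, hi'⟩ : Fin n).succ with hB
    refine ⟨Subgroup.comap_mono hle, ?_, ?_⟩
    · rintro b hb a ha
      rw [Subgroup.mem_comap] at hb ha ⊢
      have hmem : (⟨QuotientGroup.mk' N a, hle ha⟩ : B) ∈ A.subgroupOf B := by
        rwa [Subgroup.mem_subgroupOf]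
      have hconj := hnorm.conj_mem _ hmem ⟨QuotientGroup.mk' N b, hb⟩
      rw [Subgroup.mem_subgroupOf] at hconj
      simpa using hconj
    · have cA := card_comap_mk' N A
      have cB := card_comap_mk' N B
      rw [cA, cB, Nat.mul_div_mul_right _ _ Nat.card_pos, ← card_quot_eq hle]
      exact hcard



lemma isPSolvable_of_normal (N : Subgroup H) [N.Normal]
    (h1 : IsPSolvable p N) (h2 : IsPSolvable p (H ⧸ N)) : IsPSolvable p H := by
  obtain ⟨l1, hne1, hh1, hl1, hc1⟩ := chain_of_subgroup N h1
  obtain ⟨l2, hne2, hh2, hl2, hc2⟩ := chain_of_quotient N h2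
  refine isPSolvable_of_chain (l := l1 ++ l2) ?_ ?_ ?_
  · rw [List.head?_append_of_ne_nil _ hne1]
    exact hh1
  · rw [List.getLast?_append_of_ne_nil _ hne2]
    exact hl2
  · refine hc1.append hc2 ?_
    intro x hx y hy
    rw [hl1] at hx
    rw [hh2] at hy
    obtain rfl : N = x := by
      simpa using hx
    obtain rfl : N = y := by
      simpa using hy
    exact pRel_refl p N

lemma isPSolvable_of_comm (hp : p.Prime) (hc : ∀ a b : H, a * b = b * a) :
    IsPSolvable p H := by
  haveI : Fact p.Prime := ⟨hp⟩
  obtain ⟨P⟩ := (inferInstance : Nonempty (Sylow p H))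
  refine isPSolvable_of_chain (l := [⊥, (P : Subgroup H), ⊤]) rfl rfl ?_
  have hPcard : ∃ k, Nat.card (P : Subgroup H) = p ^ k := P.2.exists_card_eq
  refine List.isChain_cons_cons.mpr ⟨?_, List.isChain_cons_cons.mpr ⟨?_, List.isChain_singleton _⟩⟩
  · refine ⟨bot_le, ?_, ?_⟩
    · intro b _ a ha
      rw [Subgroup.mem_bot] at ha
      simp [ha]
    · rw [Subgroup.card_bot]
      simpa using Or.inl hPcard
  · refine ⟨le_top, ?_, ?_⟩
    · intro b _ a ha
      have : b * a * b⁻¹ = a := by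
        rw [hc b a, mul_assoc, mul_inv_cancel, mul_one]
      rwa [this]
    · right
      rw [Subgroup.card_top]
      have hidx : Nat.card H / Nat.card (P : Subgroup H) = (P : Subgroup H).index := by
        have := Subgroup.card_mul_index (P : Subgroup H)
        rw [← this, mul_comm, Nat.mul_div_cancel _ Nat.card_pos]
      rw [hidx]
      haveI : Finite (Sylow p H) :=
        Finite.of_injective (fun Q : Sylow p H => (Q : Subgroup H))
          (fun Q R h => Sylow.ext h)
      exact P.not_dvd_index

lemma isPSolvable_of_solvable_aux (hp : p.Prime) :
    ∀ (n : ℕ) (K : Type*) [Group K] [Finite K], Nat.card K ≤ n → IsSolvable K →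
      IsPSolvable p K := by
  intro n
  induction n with
  | zero =>
    intro K _ _ hcard _
    exact absurd hcard (by simpa using Nat.card_pos.ne')
  | succ n ih =>
    intro K _ _ hcard hsolv
    by_cases hcomm : ∀ a b : K, a * b = b * a
    · exact isPSolvable_of_comm hp hcomm
    · set N := commutator K with hN
      have hNtop : N ≠ ⊤ := by
        intro htop
        have hall : ∀ m, derivedSeries K m = ⊤ := by
          intro m
          induction m with
          | zero => exact derivedSeries_zero K
          | succ m ihm =>
            rw [derivedSeries_succ, ihm]
            exact htop
        obtain ⟨m, hm⟩ := hsolv.solvable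
        rw [hall m] at hm
        have hone : ∀ x : K, x = 1 := fun x => Subgroup.mem_bot.mp (hm ▸ Subgroup.mem_top x)
        exact hcomm fun a b => by rw [hone a, hone b]
      have hNlt : N < ⊤ := lt_top_iff_ne_top.mpr hNtop
      have hNcard : Nat.card N < Nat.card K := by
        have hsub : (N : Set K) ⊂ (⊤ : Subgroup K) := by
          exact Set.ssubset_iff_of_subset (fun x _ => trivial) |>.mpr (by
            obtain ⟨x, hx, hxn⟩ := SetLike.exists_of_lt hNlt
            exact ⟨x, trivial, hxn⟩)
        calc Nat.card N = (N : Set K).ncard := Nat.card_coe_set_eq _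
          _ < ((⊤ : Subgroup K) : Set K).ncard := Set.ncard_lt_ncard hsub (Set.toFinite _)
          _ = Nat.card K := by rw [Subgroup.coe_top, Set.ncard_univ]
      have h1 : IsPSolvable p N := ih N (by omega) (by haveI : Group.IsSolvable K := hsolv; exact Group.isSolvable_of_isSolvable_injective N.subtype_injective)
      have h2 : IsPSolvable p (K ⧸ N) := by
        refine isPSolvable_of_comm hp ?_
        intro x y
        induction x using QuotientGroup.induction_on with | H a =>
        induction y using QuotientGroup.induction_on with | H b =>
        rw [← QuotientGroup.mk_mul, ← QuotientGroup.mk_mul, QuotientGroup.eq]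
        open scoped commutatorElement in
        have : (a * b)⁻¹ * (b * a) = ⁅b⁻¹, a⁻¹⁆ := by
          group
        rw [this, hN]
        exact Subgroup.commutator_mem_commutator (Subgroup.mem_top _) (Subgroup.mem_top _)
      exact isPSolvable_of_normal N h1 h2

lemma isPSolvable_of_solvable (hp : p.Prime) (hsolv : IsSolvable H) : IsPSolvable p H :=
  isPSolvable_of_solvable_aux hp (Nat.card H) H le_rfl hsolv

end Transfer

theorem stmt_8 {G : Type*} [Group G] [Finite G] (p : ℕ) (hp : p.Prime)
    (h : ∀ H : Subgroup G, IsSecondMaximal H → p ∣ Nat.card H →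
      ∀ M : Subgroup G, IsCoatom M → H ≤ M → IsSolvable M) :
    ∀ M : Subgroup G, IsCoatom M → IsPSolvable p M := by
  intro M hM
  haveI : Fact p.Prime := ⟨hp⟩
  by_cases hcase : ∃ K : Subgroup M, IsCoatom K ∧ p ∣ Nat.card K
  · -- some maximal subgroup of M has order divisible by p : M is solvable
    obtain ⟨K, hK, hpK⟩ := hcase
    set Hsub := K.map M.subtype with hHsub
    have hle : Hsub ≤ M := by
      rw [hHsub]
      calc K.map M.subtype ≤ M.subtype.range := Subgroup.map_le_range _ _
        _ = M := Subgroup.range_subtype M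
    have hsub_of : Hsub.subgroupOf M = K := by
      rw [hHsub]
      exact Subgroup.comap_map_eq_self_of_injective M.subtype_injective K
    have hsm : IsSecondMaximal Hsub := ⟨M, hM, hle, by rw [hsub_of]; exact hK⟩
    have hcard : Nat.card Hsub = Nat.card K :=
      (Nat.card_congr (Subgroup.equivMapOfInjective K M.subtype
        M.subtype_injective).toEquiv).symm
    have hsolv : IsSolvable M := h Hsub hsm (hcard ▸ hpK) M hM hle
    exact isPSolvable_of_solvable hp hsolv
  · push_neg at hcase
    by_cases hpM : p ∣ Nat.card M
    · obtain ⟨P⟩ := (inferInstance : Nonempty (Sylow p M))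
      have hPdvd : p ∣ Nat.card (P : Subgroup M) := by
        rw [Sylow.card_eq_multiplicity]
        refine dvd_pow_self p ?_
        have := (Nat.Prime.factorization_pos_of_dvd hp Nat.card_pos.ne' hpM)
        omega
      by_cases hPtop : (P : Subgroup M) = ⊤
      · -- M is a p-group
        obtain ⟨k, hk⟩ := P.2.exists_card_eq
        refine isPSolvable_of_chain (l := [⊥, ⊤]) rfl rfl ?_
        refine List.isChain_cons_cons.mpr ⟨⟨bot_le, ?_, ?_⟩, List.isChain_singleton _⟩
        · intro b _ a ha
          rw [Subgroup.mem_bot] at ha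
          simp [ha]
        · left
          refine ⟨k, ?_⟩
          rw [Subgroup.card_bot, Subgroup.card_top, Nat.div_one, ← hk, hPtop,
            Subgroup.card_top]
      · -- P is proper, contained in a maximal subgroup of M, contradiction
        exfalso
        haveI : IsCoatomic (Subgroup M) := Finite.to_isCoatomic
        rcases eq_top_or_exists_le_coatom (P : Subgroup M) with htop | ⟨K, hK, hPK⟩
        · exact hPtop htop
        · exact hcase K hK (hPdvd.trans (Subgroup.card_dvd_of_le hPK))
    · -- p does not divide |M|
      refine isPSolvable_of_chain (l := [⊥, ⊤]) rfl rfl ?_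
      refine List.isChain_cons_cons.mpr ⟨⟨bot_le, ?_, ?_⟩, List.isChain_singleton _⟩
      · intro b _ a ha
        rw [Subgroup.mem_bot] at ha
        simp [ha]
      · right
        rw [Subgroup.card_bot, Subgroup.card_top, Nat.div_one]
        exact hpM
end

section
/- Let p be a prime and G a finite group. Call a second maximal subgroup H of G 'strictly second maximal' if H is maximal in every maximal subgroup of G that contains H. Suppose that for every strictly second maximal subgroup H of G with p dividing |H|, every maximal subgroup of G containing H is solvable. Then every maximal subgroup of G is either p-solvable or minimal non-p-solvable. -/
/-- `H` is a strictly second maximal subgroup of `G`: it is a second maximal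
subgroup that is maximal in every maximal subgroup of `G` containing it. -/
def IsStrictlySecondMaximal {G : Type*} [Group G] (H : Subgroup G) : Prop :=
  IsSecondMaximal H ∧ ∀ M : Subgroup G, IsCoatom M → H ≤ M → IsCoatom (H.subgroupOf M)

/-- A group is minimal non-`p`-solvable if it is not `p`-solvable but every
maximal subgroup is `p`-solvable. -/
def IsMinimalNonPSolvable (p : ℕ) (M : Type*) [Group M] : Prop :=
  ¬ IsPSolvable p M ∧ ∀ K : Subgroup M, IsCoatom K → IsPSolvable p K

open Subgroup
open scoped commutatorElement

section Aux

/-- Base case: a group whose order is a `p`-power or coprime to `p` is `p`-solvable. -/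
lemma isPSolvable_of_card (p : ℕ) (K : Type*) [Group K]
    (hQ : (∃ k, Nat.card K = p ^ k) ∨ ¬ p ∣ Nat.card K) : IsPSolvable p K := by
  refine ⟨1, ![⊥, ⊤], rfl, rfl, ?_⟩
  intro i
  have hi : i = 0 := Subsingleton.elim _ _
  subst hi
  have h0 : (![⊥, ⊤] : Fin 2 → Subgroup K) (Fin.castSucc 0) = ⊥ := rfl
  have h1 : (![⊥, ⊤] : Fin 2 → Subgroup K) (Fin.succ 0) = ⊤ := rfl
  rw [h0, h1]
  refine ⟨bot_le, by rw [bot_subgroupOf]; infer_instance, ?_⟩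
  have hcard : Nat.card ((⊤ : Subgroup K) ⧸ (⊥ : Subgroup K).subgroupOf ⊤) = Nat.card K := by
    rw [bot_subgroupOf]
    exact Nat.card_congr ((QuotientGroup.quotientBot).trans Subgroup.topEquiv).toEquiv
  rw [hcard]
  exact hQ

lemma map_subgroupOf_map {K K' : Type*} [Group K] [Group K'] (f : K →* K')
    (hf : Function.Injective f) (A B : Subgroup K) :
    (A.map f).subgroupOf (B.map f) = (A.subgroupOf B).map (B.equivMapOfInjective f hf).toMonoidHom := by
  ext ⟨x, hx⟩
  simp only [mem_subgroupOf, Subgroup.mem_map, MulEquiv.coe_toMonoidHom]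
  constructor
  · rintro ⟨a, ha, hax⟩
    obtain ⟨b, hb, hbx⟩ := hx
    have hab : a = b := hf (by rw [hax, hbx])
    refine ⟨⟨b, hb⟩, ?_, ?_⟩
    · show (⟨b, hb⟩ : B).1 ∈ A
      exact hab ▸ ha
    · apply Subtype.ext
      show f b = x
      exact hbx
  · rintro ⟨⟨b, hb⟩, hbA, hbx⟩
    refine ⟨b, hbA, ?_⟩
    have := congrArg Subtype.val hbx
    exact this

lemma step_of_map {K K' : Type*} [Group K] [Group K'] (f : K →* K')
    (hf : Function.Injective f) (A B : Subgroup K) (hn : (A.subgroupOf B).Normal) :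
    ((A.map f).subgroupOf (B.map f)).Normal ∧
      Nat.card ((B.map f) ⧸ (A.map f).subgroupOf (B.map f)) = Nat.card (B ⧸ A.subgroupOf B) := by
  haveI := hn
  set e := B.equivMapOfInjective f hf with he
  have hmap : (A.subgroupOf B).map (e : ↥B →* ↥(B.map f)) = (A.map f).subgroupOf (B.map f) :=
    (map_subgroupOf_map f hf A B).symm
  have hn' : ((A.map f).subgroupOf (B.map f)).Normal := by
    rw [← hmap]
    exact hn.map _ e.surjective
  refine ⟨hn', ?_⟩
  haveI := hn'
  exact (Nat.card_congr (QuotientGroup.congr (A.subgroupOf B) _ e hmap).toEquiv).symm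

lemma IsPSolvable.of_normal {K : Type*} [Group K] (p : ℕ) (N : Subgroup K) [hNn : N.Normal]
    (hN : IsPSolvable p N)
    (hQ : (∃ k, Nat.card (K ⧸ N) = p ^ k) ∨ ¬ p ∣ Nat.card (K ⧸ N)) : IsPSolvable p K := by
  obtain ⟨n, s, h0, hlast, hstep⟩ := hN
  have hmaptop : (⊤ : Subgroup N).map N.subtype = N := by
    rw [← MonoidHom.range_eq_map, Subgroup.range_subtype]
  refine ⟨n + 1, Fin.snoc (fun i => (s i).map N.subtype) ⊤, ?_, ?_, ?_⟩
  · have h00 : (0 : Fin (n + 2)) = Fin.castSucc 0 := rfl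
    rw [h00, Fin.snoc_castSucc, h0, Subgroup.map_bot]
  · rw [Fin.snoc_last]
  · intro i
    induction i using Fin.lastCases with
    | last =>
      rw [Fin.succ_last, Fin.snoc_last, Fin.snoc_castSucc, hlast, hmaptop]
      have hcard : Nat.card ((⊤ : Subgroup K) ⧸ N.subgroupOf ⊤) = Nat.card (K ⧸ N) :=
        calc Nat.card ((⊤ : Subgroup K) ⧸ N.subgroupOf ⊤)
            = (N.subgroupOf ⊤).index := (Subgroup.index_eq_card _).symm
          _ = N.relIndex ⊤ := rfl
          _ = N.index := Subgroup.relIndex_top_right N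
          _ = Nat.card (K ⧸ N) := Subgroup.index_eq_card N
      refine ⟨le_top, inferInstance, ?_⟩
      rw [hcard]
      exact hQ
    | cast j =>
      rw [Fin.succ_castSucc, Fin.snoc_castSucc, Fin.snoc_castSucc]
      obtain ⟨hle, hnor, hor⟩ := hstep j
      obtain ⟨hnor', hcard'⟩ := step_of_map N.subtype N.subtype_injective _ _ hnor
      refine ⟨Subgroup.map_mono hle, hnor', ?_⟩
      rw [hcard']
      exact hor

lemma commutator_ne_top_of_solvable (K : Type*) [Group K] [Group.IsSolvable K] [Nontrivial K] :
    commutator K ≠ ⊤ := by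
  intro hc
  have hd : ∀ m, derivedSeries K m = ⊤ := by
    intro m
    induction m with
    | zero => exact derivedSeries_zero K
    | succ m ih => rw [derivedSeries_succ, ih, ← commutator_def, hc]
  obtain ⟨m, hm⟩ := Group.IsSolvable.solvable (G := K)
  rw [hd m] at hm
  exact top_ne_bot hm

theorem isPSolvable_of_isSolvable (p : ℕ) (hp : p.Prime) (K : Type u) [Group K] [Finite K]
    [Group.IsSolvable K] : IsPSolvable p K := by
  by_cases hbase : (∃ k, Nat.card K = p ^ k) ∨ ¬ p ∣ Nat.card K
  · exact isPSolvable_of_card p K hbase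
  push_neg at hbase
  obtain ⟨hnp, hpd⟩ := hbase
  have hK1 : 1 < Nat.card K := by
    rcases Nat.lt_or_ge 1 (Nat.card K) with h | h
    · exact h
    · exfalso
      have hpos : 0 < Nat.card K := Nat.card_pos
      have : Nat.card K = 1 := le_antisymm h hpos
      exact hnp 0 (by rw [this, pow_zero])
  haveI : Nontrivial K := Finite.one_lt_card_iff_nontrivial.mp hK1
  have hcomm_ne : commutator K ≠ ⊤ := commutator_ne_top_of_solvable K
  by_cases hQp : ∃ k, Nat.card (K ⧸ commutator K) = p ^ k
  · have hlt : Nat.card ↥(commutator K) < Nat.card K := by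
      refine lt_of_le_of_ne (Nat.card_le_card_of_injective _ (commutator K).subtype_injective) ?_
      intro he
      exact hcomm_ne (Subgroup.eq_top_of_card_eq _ he)
    have hsub : IsPSolvable p ↥(commutator K) := isPSolvable_of_isSolvable p hp ↥(commutator K)
    exact IsPSolvable.of_normal p (commutator K) hsub (Or.inl hQp)
  · haveI : Fact p.Prime := ⟨hp⟩
    set Q := K ⧸ commutator K with hQdef
    have hcommQ : ∀ a b : Q, a * b = b * a := by
      intro a b
      induction a using QuotientGroup.induction_on with | H x =>
      induction b using QuotientGroup.induction_on with | H y =>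
      show ((x * y : K) : Q) = ((y * x : K) : Q)
      rw [QuotientGroup.eq]
      have hmem : ⁅y⁻¹, x⁻¹⁆ ∈ commutator K := by
        rw [_root_.commutator_def]
        exact Subgroup.commutator_mem_commutator (Subgroup.mem_top _) (Subgroup.mem_top _)
      have hEq : (x * y)⁻¹ * (y * x) = ⁅y⁻¹, x⁻¹⁆ := by group
      rw [hEq]
      exact hmem
    obtain ⟨P⟩ : Nonempty (Sylow p Q) := Sylow.nonempty
    have hPn : (P : Subgroup Q).Normal := by
      constructor
      intro n hn g
      have : g * n * g⁻¹ = n := by rw [hcommQ g n, mul_assoc, mul_inv_cancel, mul_one]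
      rw [this]; exact hn
    haveI := hPn
    set π := QuotientGroup.mk' (commutator K) with hπ
    set N : Subgroup K := (P : Subgroup Q).comap π with hNdef
    haveI hNn : N.Normal := hPn.comap π
    have hker : commutator K ≤ N := by
      intro x hx
      show π x ∈ (P : Subgroup Q)
      have : π x = 1 := (QuotientGroup.eq_one_iff x).2 hx
      rw [this]; exact one_mem _
    have hmapN : N.map π = P := Subgroup.map_comap_eq_self_of_surjective
      (QuotientGroup.mk'_surjective _) _
    have e3 := QuotientGroup.quotientQuotientEquivQuotient (commutator K) N hker
    have hcardQN : Nat.card (K ⧸ N) = Nat.card (Q ⧸ (P : Subgroup Q)) := by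
      have h1 : Nat.card (Q ⧸ N.map π) = Nat.card (K ⧸ N) := Nat.card_congr e3.toEquiv
      rw [← h1, hmapN]
    have hcardP : Nat.card ↥(P : Subgroup Q) = p ^ (Nat.card Q).factorization p :=
      P.card_eq_multiplicity
    have hQ0 : Nat.card Q ≠ 0 := Nat.card_pos.ne'
    have hcardquot : Nat.card (Q ⧸ (P : Subgroup Q)) = ordCompl[p] (Nat.card Q) := by
      have h1 := Subgroup.card_eq_card_quotient_mul_card_subgroup (P : Subgroup Q)
      rw [hcardP] at h1
      have h2 := Nat.ordProj_mul_ordCompl_eq_self (Nat.card Q) p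
      have hppos : 0 < p ^ (Nat.card Q).factorization p := pow_pos hp.pos _
      have h3 : Nat.card (Q ⧸ (P : Subgroup Q)) * p ^ (Nat.card Q).factorization p
          = ordCompl[p] (Nat.card Q) * p ^ (Nat.card Q).factorization p := by
        rw [← h1]
        rw [mul_comm] at h2
        exact h2.symm
      exact Nat.eq_of_mul_eq_mul_right hppos h3
    have hndvd : ¬ p ∣ Nat.card (K ⧸ N) := by
      rw [hcardQN, hcardquot]
      exact Nat.not_dvd_ordCompl hp hQ0
    have hNtop : N ≠ ⊤ := by
      intro hN
      apply hQp
      refine ⟨(Nat.card Q).factorization p, ?_⟩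
      have hPtop : (P : Subgroup Q) = ⊤ := by
        rw [← hmapN, hN]
        exact Subgroup.map_top_of_surjective _ (QuotientGroup.mk'_surjective _)
      rw [← hcardP, hPtop, Subgroup.card_top]
    have hlt : Nat.card ↥N < Nat.card K := by
      refine lt_of_le_of_ne (Nat.card_le_card_of_injective _ N.subtype_injective) ?_
      intro he
      exact hNtop (Subgroup.eq_top_of_card_eq _ he)
    have hsub : IsPSolvable p ↥N := isPSolvable_of_isSolvable p hp ↥N
    exact IsPSolvable.of_normal p N hsub (Or.inr hndvd)
termination_by Nat.card K
decreasing_by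
  · exact hlt
  · exact hlt

lemma Subgroup.inclusion_injective' {G : Type*} [Group G] {H K : Subgroup G} (h : H ≤ K) :
    Function.Injective (Subgroup.inclusion h) := fun a b hab => by
  apply Subtype.ext
  have := congrArg Subtype.val hab
  simpa [Subgroup.coe_inclusion] using this

lemma solvable_of_secondMax {G : Type*} [Group G] [Finite G] (p : ℕ) (hp : p.Prime)
    (h : ∀ H : Subgroup G, IsStrictlySecondMaximal H → p ∣ Nat.card H →
      ∀ M : Subgroup G, IsCoatom M → H ≤ M → IsSolvable M) :
    ∀ n (L : Subgroup G), Nat.card G - Nat.card L ≤ n → IsSecondMaximal L →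
      p ∣ Nat.card L → IsSolvable L := by
  intro n
  induction n with
  | zero =>
    intro L hn hsec _
    exfalso
    have hle : Nat.card L ≤ Nat.card G := Nat.card_le_card_of_injective _ L.subtype_injective
    have hLtop : L = ⊤ := Subgroup.eq_top_of_card_eq _
      (le_antisymm hle (Nat.sub_eq_zero_iff_le.1 (Nat.le_zero.1 hn)))
    obtain ⟨M, hM, hLM, _⟩ := hsec
    exact hM.1 (top_le_iff.1 (hLtop ▸ hLM))
  | succ n ih =>
    intro L hn hsec hdvd
    by_cases hs : IsStrictlySecondMaximal L
    · obtain ⟨M, hM, hLM, _⟩ := hs.1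
      haveI : Group.IsSolvable ↥M := h L hs hdvd M hM hLM
      exact solvable_of_solvable_injective (Subgroup.inclusion_injective' hLM)
    · rw [IsStrictlySecondMaximal] at hs
      push_neg at hs
      obtain ⟨M', hM', hLM', hnc⟩ := hs hsec
      have hLne : L ≠ M' := by
        rintro rfl
        obtain ⟨M0, hM0, hLM0, hco0⟩ := hsec
        rcases eq_or_lt_of_le hLM0 with rfl | hlt0
        · rw [Subgroup.subgroupOf_self] at hco0
          exact hco0.1 rfl
        · exact hM0.1 (hM'.2 M0 hlt0)
      have hne_top : L.subgroupOf M' ≠ ⊤ := fun he =>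
        hLne (le_antisymm hLM' (Subgroup.subgroupOf_eq_top.1 he))
      haveI : Finite (Subgroup ↥M') :=
        Finite.of_injective (fun H : Subgroup ↥M' => (H : Set ↥M')) SetLike.coe_injective
      obtain ⟨C, hC, hLC⟩ :=
        (IsCoatomic.eq_top_or_exists_le_coatom (L.subgroupOf M')).resolve_left hne_top
      set L'' := C.map M'.subtype with hL''def
      have hL''M' : L'' ≤ M' := Subgroup.map_subtype_le C
      have hback : L''.subgroupOf M' = C :=
        Subgroup.comap_map_eq_self_of_injective M'.subtype_injective C
      have hLL'' : L ≤ L'' := by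
        have h1 : (L.subgroupOf M').map M'.subtype ≤ L'' := Subgroup.map_mono hLC
        rwa [Subgroup.subgroupOf_map_subtype, inf_eq_left.mpr hLM'] at h1
      have hLneL'' : L ≠ L'' := by
        intro he
        apply hnc
        rw [he, hback]
        exact hC
      have hsec'' : IsSecondMaximal L'' := ⟨M', hM', hL''M', by rw [hback]; exact hC⟩
      have hdvd'' : p ∣ Nat.card L'' := hdvd.trans (Subgroup.card_dvd_of_le hLL'')
      have hcardlt : Nat.card ↥L + 1 ≤ Nat.card ↥L'' := by
        refine Nat.succ_le_of_lt (lt_of_le_of_ne (Subgroup.card_le_of_le hLL'') ?_)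
        intro he
        exact hLneL'' (Subgroup.eq_of_le_of_card_ge hLL'' he.ge)
      have hn'' : Nat.card G - Nat.card ↥L'' ≤ n := by omega
      haveI : Group.IsSolvable ↥L'' := ih L'' hn'' hsec'' hdvd''
      exact solvable_of_solvable_injective (Subgroup.inclusion_injective' hLL'')

end Aux

theorem stmt_10 {G : Type*} [Group G] [Finite G] (p : ℕ) (hp : p.Prime)
    (h : ∀ H : Subgroup G, IsStrictlySecondMaximal H → p ∣ Nat.card H →
      ∀ M : Subgroup G, IsCoatom M → H ≤ M → IsSolvable M) :
    ∀ M : Subgroup G, IsCoatom M → IsPSolvable p M ∨ IsMinimalNonPSolvable p M := by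
  intro M hM
  by_cases hps : IsPSolvable p ↥M
  · exact Or.inl hps
  · refine Or.inr ⟨hps, ?_⟩
    intro K hK
    have hsub : (K.map M.subtype).subgroupOf M = K :=
      Subgroup.comap_map_eq_self_of_injective M.subtype_injective K
    have hsec : IsSecondMaximal (K.map M.subtype) :=
      ⟨M, hM, Subgroup.map_subtype_le K, by rw [hsub]; exact hK⟩
    have e := K.equivMapOfInjective M.subtype M.subtype_injective
    have ecard : Nat.card ↥K = Nat.card ↥(K.map M.subtype) := Nat.card_congr e.toEquiv
    by_cases hdvd : p ∣ Nat.card ↥(K.map M.subtype)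
    · haveI : Group.IsSolvable ↥(K.map M.subtype) :=
        solvable_of_secondMax p hp h (Nat.card G) _ (Nat.sub_le _ _) hsec hdvd
      haveI : Group.IsSolvable ↥K := solvable_of_solvable_injective (f := e.toMonoidHom) e.injective
      exact isPSolvable_of_isSolvable p hp ↥K
    · exact isPSolvable_of_card p ↥K (Or.inr (by rw [ecard]; exact hdvd))
end

section
/- Let G be a finite solvable group. Then every second maximal subgroup H of G satisfies: there exists a maximal subgroup M of G containing H with H_G < M_G. -/
open scoped commutatorElement

theorem stmt_12 {G : Type*} [Group G] [Finite G] (hG : IsSolvable G) :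
    ∀ H : Subgroup G, IsSecondMaximal H →
      ∃ M : Subgroup G, IsCoatom M ∧ H ≤ M ∧ H.normalCore < M.normalCore := by
  rintro H ⟨M₀, hM₀, hHM₀, hHsub⟩
  have hHlt : H < M₀ :=
    lt_of_le_of_ne hHM₀ fun h => hHsub.1 (Subgroup.subgroupOf_eq_top.mpr h.ge)
  set K := H.normalCore with hKdef
  have hKH : K ≤ H := H.normalCore_le
  -- the quotient G ⧸ K
  let φ : G →* G ⧸ K := QuotientGroup.mk' K
  have hφsurj : Function.Surjective φ := QuotientGroup.mk'_surjective K
  have hker : φ.ker = K := QuotientGroup.ker_mk' K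
  haveI : Group.IsSolvable (G ⧸ K) := (haveI : Group.IsSolvable G := hG; solvable_of_surjective hφsurj)
  -- a minimal normal subgroup A of G ⧸ K
  have hTopmem : (⊤ : Subgroup (G ⧸ K)).Normal ∧ (⊤ : Subgroup (G ⧸ K)) ≠ ⊥ := by
    refine ⟨inferInstance, ?_⟩
    intro h
    have hKtop : K ≠ (⊤ : Subgroup G) := fun hk => by
      have : M₀ ≤ H := le_trans le_top (hk ▸ hKH)
      exact absurd this (not_le_of_gt hHlt)
    apply hKtop
    ext g
    simp only [Subgroup.mem_top, iff_true]
    have : φ g ∈ (⊤ : Subgroup (G ⧸ K)) := trivial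
    rw [h, Subgroup.mem_bot] at this
    rw [← hker]
    exact this
  obtain ⟨A, ⟨hAnorm, hAbot⟩, hAmin⟩ :=
    (Finite.to_wellFoundedLT (α := Subgroup (G ⧸ K))).wf.has_min
      {A : Subgroup (G ⧸ K) | A.Normal ∧ A ≠ ⊥} ⟨⊤, hTopmem⟩
  haveI := hAnorm
  -- A is abelian: ⁅A, A⁆ = ⊥
  have hAA : ⁅A, A⁆ = (⊥ : Subgroup (G ⧸ K)) := by
    by_contra hne
    have hle : ⁅A, A⁆ ≤ A := Subgroup.commutator_le_left A A
    have hnotlt : ¬⁅A, A⁆ < A := hAmin _ ⟨Subgroup.commutator_normal A A, hne⟩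
    have heq : ⁅A, A⁆ = A := hle.lt_or_eq.resolve_left hnotlt
    have hder : ∀ n, A ≤ derivedSeries (G ⧸ K) n := by
      intro n
      induction n with
      | zero => exact le_top
      | succ n ih =>
        rw [derivedSeries_succ, ← heq]
        exact Subgroup.commutator_mono ih ih
    obtain ⟨n, hn⟩ := Group.IsSolvable.solvable (G := G ⧸ K)
    exact hAbot (le_bot_iff.mp (hn ▸ hder n))
  -- pull A back to G
  set Abar := A.comap φ with hAbardef
  have hAbarnorm : Abar.Normal := hAnorm.comap φ
  have hKAbar : K ≤ Abar := by
    intro k hk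
    have : φ k = 1 := by rwa [← MonoidHom.mem_ker, hker]
    show φ k ∈ A
    rw [this]; exact A.one_mem
  have hKneAbar : K ≠ Abar := by
    intro h
    apply hAbot
    have hmap : Abar.map φ = A := Subgroup.map_comap_eq_self_of_surjective hφsurj A
    rw [← hmap, ← h]
    rw [Subgroup.map_eq_bot_iff]
    rw [hker]
  have hcomm : ⁅Abar, Abar⁆ ≤ K := by
    rw [Subgroup.commutator_le]
    intro g hg h hh
    have hmem : ⁅φ g, φ h⁆ ∈ ⁅A, A⁆ := Subgroup.commutator_mem_commutator hg hh
    rw [hAA, Subgroup.mem_bot] at hmem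
    have : φ ⁅g, h⁆ = 1 := by rw [map_commutatorElement]; exact hmem
    rwa [← hker, MonoidHom.mem_ker]
  by_cases hcase : H ⊔ Abar = ⊤
  · -- H·Abar = G : use M₀
    refine ⟨M₀, hM₀, hHM₀, ?_⟩
    set B := Abar ⊓ M₀ with hBdef
    have hmemtop : ∀ g : G, ∃ h ∈ H, ∃ a ∈ Abar, h * a = g := by
      intro g
      have : g ∈ H ⊔ Abar := by rw [hcase]; trivial
      rw [← SetLike.mem_coe, Subgroup.mul_normal] at this
      exact this
    have hBnorm : B.Normal := by
      constructor
      intro b hb g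
      obtain ⟨hbAbar, hbM⟩ := hb
      obtain ⟨h, hh, a, ha, rfl⟩ := hmemtop g
      constructor
      · exact hAbarnorm.conj_mem b hbAbar _
      · -- (h * a) * b * (h * a)⁻¹ ∈ M₀
        have hcomm' : ⁅a, b⁆ ∈ M₀ := hHM₀ (hKH (hcomm (Subgroup.commutator_mem_commutator ha hbAbar)))
        have hab : a * b * a⁻¹ ∈ M₀ := by
          have : a * b * a⁻¹ = ⁅a, b⁆ * b := by group
          rw [this]
          exact M₀.mul_mem hcomm' hbM
        have : h * a * b * (h * a)⁻¹ = h * (a * b * a⁻¹) * h⁻¹ := by group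
        rw [mul_assoc h a b] at this ⊢
        rw [this]
        exact M₀.mul_mem (M₀.mul_mem (hHM₀ hh) hab) (M₀.inv_mem (hHM₀ hh))
    haveI := hBnorm
    have hKB : K ≤ B := le_inf hKAbar (hKH.trans hHM₀)
    have hKneB : K ≠ B := by
      intro hKB'
      apply not_le_of_gt hHlt
      intro m hm
      obtain ⟨h, hh, a, ha, rfl⟩ := hmemtop m
      have haM : a ∈ M₀ := by
        have : a = h⁻¹ * (h * a) := by group
        rw [this]
        exact M₀.mul_mem (M₀.inv_mem (hHM₀ hh)) hm
      have : a ∈ K := hKB' ▸ (⟨ha, haM⟩ : a ∈ B)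
      exact H.mul_mem hh (hKH this)
    have hBcore : B ≤ M₀.normalCore := Subgroup.normal_le_normalCore.mpr inf_le_right
    exact lt_of_lt_of_le (hKB.lt_of_ne hKneB) hBcore
  · -- H·Abar < G : take a maximal subgroup above it
    obtain ⟨M, hM, hle⟩ :=
      ((Finite.to_isCoatomic (α := Subgroup G)).eq_top_or_exists_le_coatom (H ⊔ Abar)).resolve_left
        hcase
    refine ⟨M, hM, le_trans le_sup_left hle, ?_⟩
    haveI := hAbarnorm
    have hAbarcore : Abar ≤ M.normalCore :=
      Subgroup.normal_le_normalCore.mpr (le_trans le_sup_right hle)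
    exact lt_of_lt_of_le (hKAbar.lt_of_ne hKneAbar) hAbarcore
end

section
/- Let L be a finite group that is a direct product of n ≥ 1 pairwise isomorphic nonabelian simple groups A₁ × ⋯ × Aₙ, with all Aᵢ ≅ A. If L has maximal subgroups (or more generally proper subgroups) of index p^a and of index q^b, where p and q are distinct primes and a, b ≥ 1, then the simple group A possesses maximal subgroups of index p^{a'} and of index q^{b'} for some a', b' ≥ 1. -/
def myPiFinSucc (n : ℕ) (A : Type*) [Group A] : (Fin (n + 1) → A) ≃* A × (Fin n → A) :=
  { (Fin.consEquiv fun _ : Fin (n + 1) => A).symm with map_mul' := fun _ _ => rfl }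

lemma aux13 {A : Type*} [Group A] [Finite A] [IsSimpleGroup A] (m : ℕ) :
    ∀ n (K : Subgroup (Fin n → A)), K ≠ ⊤ → K.index ∣ m →
      ∃ H : Subgroup A, H ≠ ⊤ ∧ H.index ∣ m := by
  intro n
  induction n with
  | zero =>
    intro K hK _
    exact absurd (Subgroup.ext fun x => by
      simpa using (Subsingleton.elim x 1 ▸ K.one_mem : x ∈ K)) hK
  | succ n ih =>
    intro K hK hdvd
    set e := (myPiFinSucc n A).symm.toMonoidHom with he
    set K2 : Subgroup (A × (Fin n → A)) := K.comap e with hK2def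
    have hes : Function.Surjective e := (myPiFinSucc n A).symm.surjective
    have hK2i : K2.index = K.index := Subgroup.index_comap_of_surjective _ hes
    have hK2dvd : K2.index ∣ m := hK2i ▸ hdvd
    have hK2t : K2 ≠ ⊤ := by
      intro h
      apply hK
      rw [Subgroup.eq_top_iff']
      intro x
      have hx : (myPiFinSucc n A) x ∈ K2 := h ▸ Subgroup.mem_top _
      have : e ((myPiFinSucc n A) x) ∈ K := hx
      simpa [he] using this
    by_cases h0 : K2.map (MonoidHom.snd A (Fin n → A)) = ⊤
    · by_cases h1 : K2.map (MonoidHom.fst A (Fin n → A)) = ⊤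
      · -- both projections surjective: Goursat + simplicity
        set N : Subgroup A := K2.comap (MonoidHom.inl A (Fin n → A)) with hNdef
        have hNnormal : N.Normal := by
          constructor
          intro x hx y
          obtain ⟨⟨y', g⟩, hyK, hy⟩ :=
            Subgroup.mem_map.mp (h1 ▸ Subgroup.mem_top y)
          simp only [MonoidHom.coe_fst] at hy
          subst hy
          have hx' : ((x, 1) : A × (Fin n → A)) ∈ K2 := hx
          have h3 := K2.mul_mem (K2.mul_mem hyK hx') (K2.inv_mem hyK)
          have heq : ((y', g) : A × (Fin n → A)) * (x, 1) * (y', g)⁻¹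
              = (y' * x * y'⁻¹, 1) := by
            ext <;> simp [mul_assoc]
          rw [heq] at h3
          exact h3
        rcases hNnormal.eq_bot_or_eq_top with hNb | hNt
        · -- N = ⊥ : snd restricted to K2 is bijective, so index = |A|
          refine ⟨⊥, bot_ne_top, ?_⟩
          have hbi : (⊥ : Subgroup A).index = Nat.card A := Subgroup.index_bot
          set f := (MonoidHom.snd A (Fin n → A)).comp K2.subtype with hf
          have hfs : Function.Surjective f := by
            intro g
            obtain ⟨k, hkK, hk⟩ := Subgroup.mem_map.mp (h0 ▸ Subgroup.mem_top g)
            exact ⟨⟨k, hkK⟩, hk⟩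
          have hfi : Function.Injective f := by
            intro k1 k2 hk
            have hmem : ((k1 : A × (Fin n → A)) * (k2 : A × (Fin n → A))⁻¹) ∈ K2 :=
              K2.mul_mem k1.2 (K2.inv_mem k2.2)
            have hsnd : ((k1 : A × (Fin n → A)) * (k2 : A × (Fin n → A))⁻¹).2 = 1 := by
              have h2 : (k1 : A × (Fin n → A)).2 = (k2 : A × (Fin n → A)).2 := hk
              simp [Prod.snd_mul, h2]
            have hN1 : ((k1 : A × (Fin n → A)) * (k2 : A × (Fin n → A))⁻¹).1 ∈ N := by
              have : ((((k1 : A × (Fin n → A)) * (k2 : A × (Fin n → A))⁻¹).1, (1 : Fin n → A))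
                  : A × (Fin n → A)) ∈ K2 := by
                rw [← hsnd]
                exact hmem
              exact this
            rw [hNb] at hN1
            have h1' : ((k1 : A × (Fin n → A)) * (k2 : A × (Fin n → A))⁻¹) = 1 :=
              Prod.ext_iff.mpr ⟨Subgroup.mem_bot.mp hN1, hsnd⟩
            have := mul_inv_eq_one.mp h1'
            exact Subtype.ext this
          have hcard : Nat.card K2 = Nat.card (Fin n → A) :=
            Nat.card_eq_of_bijective f ⟨hfi, hfs⟩
          have hprod : Nat.card (A × (Fin n → A)) = Nat.card A * Nat.card (Fin n → A) :=
            Nat.card_prod _ _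
          have hmc := K2.index_mul_card
          rw [hcard, hprod] at hmc
          have hpos : 0 < Nat.card (Fin n → A) := Nat.card_pos
          have : K2.index = Nat.card A := by
            have := Nat.eq_of_mul_eq_mul_right hpos hmc
            exact this
          rw [hbi, ← this]
          exact hK2dvd
        · -- N = ⊤ : together with h0, K2 = ⊤, contradiction
          exfalso
          apply hK2t
          rw [Subgroup.eq_top_iff']
          rintro ⟨x, g⟩
          obtain ⟨⟨x', g'⟩, hkK, hk⟩ := Subgroup.mem_map.mp (h0 ▸ Subgroup.mem_top g)
          simp only [MonoidHom.coe_snd] at hk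
          subst hk
          have hx1 : ((x * x'⁻¹, 1) : A × (Fin n → A)) ∈ K2 := by
            have : x * x'⁻¹ ∈ N := hNt ▸ Subgroup.mem_top _
            exact this
          have := K2.mul_mem hx1 hkK
          simpa using this
      · -- projection to A is a proper subgroup
        refine ⟨K2.map (MonoidHom.fst A (Fin n → A)), h1, ?_⟩
        have hle : K2 ≤ (K2.map (MonoidHom.fst A (Fin n → A))).comap
            (MonoidHom.fst A (Fin n → A)) := Subgroup.le_comap_map _ _
        have heq : ((K2.map (MonoidHom.fst A (Fin n → A))).comap
            (MonoidHom.fst A (Fin n → A))).index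
            = (K2.map (MonoidHom.fst A (Fin n → A))).index :=
          Subgroup.index_comap_of_surjective _ Prod.fst_surjective
        exact dvd_trans (heq ▸ Subgroup.index_dvd_of_le hle) hK2dvd
    · -- projection to Fin n → A is proper: recurse
      have hle : K2 ≤ (K2.map (MonoidHom.snd A (Fin n → A))).comap
          (MonoidHom.snd A (Fin n → A)) := Subgroup.le_comap_map _ _
      have heq : ((K2.map (MonoidHom.snd A (Fin n → A))).comap
          (MonoidHom.snd A (Fin n → A))).index
          = (K2.map (MonoidHom.snd A (Fin n → A))).index :=
        Subgroup.index_comap_of_surjective _ Prod.snd_surjective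
      exact ih _ h0 (dvd_trans (heq ▸ Subgroup.index_dvd_of_le hle) hK2dvd)

lemma main13 {A : Type*} [Group A] [Finite A] [IsSimpleGroup A] {n p a : ℕ}
    (hp : p.Prime) (ha : 1 ≤ a)
    (K : Subgroup (Fin n → A)) (hK : K.index = p ^ a) :
    ∃ H : Subgroup A, IsCoatom H ∧ ∃ a' : ℕ, 1 ≤ a' ∧ H.index = p ^ a' := by
  have hKt : K ≠ ⊤ := by
    intro h
    rw [h, Subgroup.index_top] at hK
    exact absurd hK.symm (Nat.ne_of_gt (Nat.one_lt_pow (by omega) hp.one_lt))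
  obtain ⟨H, hHt, hHdvd⟩ := aux13 (p ^ a) n K hKt (hK ▸ dvd_rfl)
  obtain ⟨M, hM, hHM⟩ := (eq_top_or_exists_le_coatom H).resolve_left hHt
  have hMdvd : M.index ∣ p ^ a := dvd_trans (Subgroup.index_dvd_of_le hHM) hHdvd
  obtain ⟨a', ha'le, ha'⟩ := (Nat.dvd_prime_pow hp).mp hMdvd
  refine ⟨M, hM, a', ?_, ha'⟩
  rcases Nat.eq_zero_or_pos a' with h0 | h1
  · exfalso
    rw [h0, pow_zero] at ha'
    exact hM.1 (Subgroup.index_eq_one.mp ha')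
  · exact h1

theorem stmt_13 {A : Type*} [Group A] [Finite A] [IsSimpleGroup A]
    (hA : ∃ a b : A, a * b ≠ b * a)
    (n : ℕ) (hn : 1 ≤ n) (p q : ℕ) (hp : p.Prime) (hq : q.Prime) (hpq : p ≠ q)
    (a b : ℕ) (ha : 1 ≤ a) (hb : 1 ≤ b)
    (K₁ K₂ : Subgroup (Fin n → A))
    (hK₁ : K₁.index = p ^ a) (hK₂ : K₂.index = q ^ b) :
    (∃ H : Subgroup A, IsCoatom H ∧ ∃ a' : ℕ, 1 ≤ a' ∧ H.index = p ^ a') ∧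
      (∃ H : Subgroup A, IsCoatom H ∧ ∃ b' : ℕ, 1 ≤ b' ∧ H.index = q ^ b') := by
  exact ⟨main13 hp ha K₁ hK₁, main13 hq hb K₂ hK₂⟩
end
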